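/- Let T be a finite rooted tree with nonnegative real weights on its nodes. The weighted Knuth estimator — follow a uniformly random root-to-leaf path, and output Σ_j (∏_{l<j} d_l)·w(n_j) summing over visited nodes n_j with weights w and branching factors d_l — is an unbiased estimator of the total weight Σ_{v ∈ T} w(v). -/

import Mathlib

/-- A finite rooted tree with a real weight at every node. -/
inductive WTree where
  | node : ℝ → List WTree → WTree

namespace WTree

/-- The weight at the root. -/
def weight : WTree → ℝ
  | node w _ => w

/-- The children of the root. -/
def children : WTree → List WTree
  | node _ cs => cs

/-- The total weight of the tree: the sum of the weights of all nodes. -/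
noncomputable def totalWeight : WTree → ℝ
  | node w cs => w + (cs.attach.map (fun x => totalWeight x.1)).sum
decreasing_by
  all_goals
    have h := List.sizeOf_lt_of_mem x.2
    simp only [WTree.node.sizeOf_spec] at h ⊢
    omega

/-- All weights of the tree are nonnegative. -/
def allNonneg : WTree → Prop
  | node w cs => 0 ≤ w ∧ ∀ x ∈ cs.attach, allNonneg x.1
decreasing_by
  all_goals
    have h := List.sizeOf_lt_of_mem x.2
    simp only [WTree.node.sizeOf_spec] at h ⊢
    omega

/-- All root-to-leaf random walks of the weighted Knuth estimator, as a list of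
(probability, output) pairs: the walk descends from the root choosing a
uniformly random child at each step; visiting the nodes `n₁, n₂, …` with
branching factors `d₁, d₂, …`, the output is `Σ_j (∏_{l<j} d_l) · w(n_j)`. -/
noncomputable def wwalks : WTree → List (ℝ × ℝ)
  | node w [] => [(1, w)]
  | node w (c :: cs) =>
      (c :: cs).attach.flatMap (fun x =>
        (wwalks x.1).map (fun pv =>
          (pv.1 / ((c :: cs).length : ℝ),
            w + ((c :: cs).length : ℝ) * pv.2)))
decreasing_by
  all_goals
    have h := List.sizeOf_lt_of_mem x.2
    simp only [List.cons.sizeOf_spec, WTree.node.sizeOf_spec] at h ⊢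
    omega

theorem list_sum_flatMap {α : Type*} (l : List α) (f : α → List ℝ) :
    (l.flatMap f).sum = (l.map (fun a => (f a).sum)).sum := by
  induction l with
  | nil => simp
  | cons a l ih => simp [ih]

theorem wwalks_sums : ∀ t : WTree,
    ((wwalks t).map Prod.fst).sum = 1 ∧
    ((wwalks t).map (fun pv => pv.1 * pv.2)).sum = totalWeight t
  | node w [] => by simp [wwalks, totalWeight]
  | node w (c :: cs) => by
      have IH : ∀ x ∈ (c :: cs).attach,
          ((wwalks x.1).map Prod.fst).sum = 1 ∧
          ((wwalks x.1).map (fun pv => pv.1 * pv.2)).sum = totalWeight x.1 :=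
        fun x _ => wwalks_sums x.1
      set n : ℝ := ((c :: cs).length : ℝ) with hn
      have hn0 : n ≠ 0 := by
        rw [hn]; exact Nat.cast_ne_zero.mpr (by simp)
      constructor
      · rw [wwalks]
        rw [List.map_flatMap, list_sum_flatMap]
        have : ∀ x ∈ (c :: cs).attach,
            (((wwalks x.1).map (fun pv =>
              (pv.1 / n, w + n * pv.2))).map Prod.fst).sum = 1 / n := by
          intro x hx
          rw [List.map_map]
          have : (Prod.fst ∘ fun pv : ℝ × ℝ => (pv.1 / n, w + n * pv.2)) =
              fun pv : ℝ × ℝ => pv.1 * (1 / n) := by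
            funext pv; simp [div_eq_mul_inv]
          rw [this, List.sum_map_mul_right, (IH x hx).1, one_mul]
        rw [List.map_congr_left this, List.map_const', List.sum_replicate,
          List.length_attach]
        simp only [hn, nsmul_eq_mul]
        rw [mul_one_div]
        exact div_self (Nat.cast_ne_zero.mpr (by simp))
      · rw [wwalks]
        rw [List.map_flatMap, list_sum_flatMap]
        have : ∀ x ∈ (c :: cs).attach,
            (((wwalks x.1).map (fun pv =>
              (pv.1 / n, w + n * pv.2))).map (fun pv => pv.1 * pv.2)).sum =
            w / n + totalWeight x.1 := by
          intro x hx
          rw [List.map_map]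
          have : ((fun pv : ℝ × ℝ => pv.1 * pv.2) ∘ fun pv : ℝ × ℝ =>
              (pv.1 / n, w + n * pv.2)) =
              fun pv : ℝ × ℝ => pv.1 * (w / n) + pv.1 * pv.2 := by
            funext pv
            simp only [Function.comp_apply]
            field_simp
          rw [this, List.sum_map_add, List.sum_map_mul_right, (IH x hx).1,
            (IH x hx).2, one_mul]
        rw [List.map_congr_left this, List.sum_map_add, List.map_const',
          List.sum_replicate, List.length_attach, totalWeight]
        have hlen : ((c :: cs).length : ℝ) ≠ 0 := Nat.cast_ne_zero.mpr (by simp)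
        simp only [hn, nsmul_eq_mul]
        rw [mul_div_assoc', mul_comm, mul_div_assoc, div_self hlen, mul_one]
decreasing_by
  all_goals
    have h := List.sizeOf_lt_of_mem x.2
    simp only [List.cons.sizeOf_spec, WTree.node.sizeOf_spec] at h ⊢
    omega

end WTree

open WTree in
/-- **The weighted Knuth estimator is unbiased for the total weight**: for a
finite rooted tree with nonnegative node weights, the expected value of the
output `Σ_j (∏_{l<j} d_l)·w(n_j)` along a uniformly random root-to-leaf path
equals the total weight `Σ_{v ∈ T} w(v)` of the tree. -/
theorem weighted_knuth_unbiased (t : WTree) (hw : allNonneg t) :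
    ((wwalks t).map (fun pv => pv.1 * pv.2)).sum = totalWeight t := by
  exact (wwalks_sums t).2
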